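/- arXiv:1809.04200 — 2 statements merged into one kernel-verified Lean document; each statement's English description precedes it below -/
import Mathlib

section
/- Let V be a real inner product space of finite dimension n ≥ 2, let k be a positive integer, and for each i = 1, …, k let εᵢ ∈ {1, −1} and let φᵢ be a symmetric bilinear form on V with eigenvalues λ₁⁽ⁱ⁾, …, λₙ⁽ⁱ⁾ repeated according to multiplicity. Set mᵢ = min{εᵢ λⱼ⁽ⁱ⁾ λₗ⁽ⁱ⁾ : j ≠ l} and Mᵢ = max{εᵢ λⱼ⁽ⁱ⁾ λₗ⁽ⁱ⁾ : j ≠ l}, and let R = Σᵢ εᵢ R_{φᵢ}. Then for every pair of linearly independent vectors x, y ∈ V, one has Σᵢ mᵢ ≤ κ_R(x,y) ≤ Σᵢ Mᵢ. -/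
/-- The canonical algebraic curvature tensor associated to a bilinear form `φ`:
`R_φ(x,y,z,w) = φ(x,w)φ(y,z) − φ(x,z)φ(y,w)`. -/
def canonCT {V : Type*} (φ : V → V → ℝ) (x y z w : V) : ℝ :=
  φ x w * φ y z - φ x z * φ y w

/-- The sectional curvature of the 2-plane spanned by `x` and `y` with respect to a
curvature tensor `R`: `κ_R(x,y) = R(x,y,y,x)/(⟨x,x⟩⟨y,y⟩ − ⟨x,y⟩²)`. -/
noncomputable def sectCurv {V : Type*} [NormedAddCommGroup V] [InnerProductSpace ℝ V]
    (R : V → V → V → V → ℝ) (x y : V) : ℝ :=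
  R x y y x / ((inner ℝ x x : ℝ) * (inner ℝ y y : ℝ) - (inner ℝ x y : ℝ) ^ 2)

private lemma lagrange_id {n : ℕ} (L a c : Fin n → ℝ) :
    2 * ((∑ j, L j * (a j)^2) * (∑ j, L j * (c j)^2) - (∑ j, L j * (a j * c j))^2)
    = ∑ j, ∑ l, L j * L l * (a j * c l - a l * c j)^2 := by
  have key : ∀ j l, L j * L l * (a j * c l - a l * c j)^2
      = (L j * (a j)^2) * (L l * (c l)^2) + (L j * (c j)^2) * (L l * (a l)^2)
        - 2 * ((L j * (a j * c j)) * (L l * (a l * c l))) := fun j l => by ring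
  simp_rw [key, Finset.sum_sub_distrib, Finset.sum_add_distrib, ← Finset.mul_sum,
    ← Finset.sum_mul]
  ring


/-- Sectional curvature bounds for a linear combination `R = Σᵢ εᵢ R_{φᵢ}` of canonical
algebraic curvature tensors, in terms of the extreme signed pairwise products of the
eigenvalues of each `φᵢ`. -/
theorem sectional_curvature_bounds_of_sum_canonCT
    {V : Type*} [NormedAddCommGroup V] [InnerProductSpace ℝ V] [FiniteDimensional ℝ V]
    {n : ℕ} (hn : 2 ≤ n) (hdim : Module.finrank ℝ V = n)
    (k : ℕ) (hk : 0 < k)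
    (ε : Fin k → ℝ) (hε : ∀ i, ε i = 1 ∨ ε i = -1)
    (φ : Fin k → (V →ₗ[ℝ] V →ₗ[ℝ] ℝ)) (hφsymm : ∀ i, ∀ x y : V, φ i x y = φ i y x)
    (A : Fin k → (V →ₗ[ℝ] V)) (hA : ∀ i, ∀ x y : V, φ i x y = (inner ℝ (A i x) y : ℝ))
    (b : Fin k → OrthonormalBasis (Fin n) ℝ V) (lam : Fin k → Fin n → ℝ)
    (hb : ∀ i j, A i (b i j) = lam i j • b i j)
    (m M : Fin k → ℝ)
    (hm : ∀ i, IsLeast {c : ℝ | ∃ j l : Fin n, j ≠ l ∧ c = ε i * (lam i j * lam i l)} (m i))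
    (hM : ∀ i, IsGreatest {c : ℝ | ∃ j l : Fin n, j ≠ l ∧ c = ε i * (lam i j * lam i l)} (M i)) :
    ∀ x y : V, LinearIndependent ℝ ![x, y] →
      (∑ i, m i) ≤
        sectCurv (fun a b' c d => ∑ i, ε i * canonCT (fun u v => φ i u v) a b' c d) x y ∧
      sectCurv (fun a b' c d => ∑ i, ε i * canonCT (fun u v => φ i u v) a b' c d) x y ≤
        (∑ i, M i) := by
  intro x y hxy
  have hpair := LinearIndependent.pair_iff.mp hxy
  have hx0 : x ≠ 0 := by
    intro h; rcases hpair 1 0 (by simp [h]) with ⟨h1, _⟩; exact one_ne_zero h1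
  -- strict Cauchy-Schwarz
  have h1 : (inner ℝ x y : ℝ) < ‖x‖ * ‖y‖ := by
    rw [inner_lt_norm_mul_iff_real]
    intro h
    have := hpair ‖y‖ (-‖x‖) (by rw [neg_smul, h]; abel)
    have h2 : ‖x‖ = 0 := by linarith [this.2]
    exact hx0 (norm_eq_zero.mp h2)
  have h1' : -(inner ℝ x y : ℝ) < ‖x‖ * ‖y‖ := by
    have key := (inner_lt_norm_mul_iff_real (x := x) (y := -y)).mpr ?_
    · rw [inner_neg_right] at key
      simpa using key
    · intro h
      rw [norm_neg, smul_neg] at h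
      have := hpair ‖y‖ ‖x‖ (by rw [h]; abel)
      exact hx0 (norm_eq_zero.mp this.2)
  have hG : 0 < (inner ℝ x x : ℝ) * (inner ℝ y y : ℝ) - (inner ℝ x y : ℝ)^2 := by
    have h3 : (inner ℝ x y : ℝ)^2 < (‖x‖ * ‖y‖)^2 := sq_lt_sq' (by linarith) h1
    rw [real_inner_self_eq_norm_sq, real_inner_self_eq_norm_sq]
    nlinarith
  set G : ℝ := (inner ℝ x x : ℝ) * (inner ℝ y y : ℝ) - (inner ℝ x y : ℝ)^2 with hGdef
  -- per-summand bounds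
  have key : ∀ i : Fin k,
      m i * G ≤ ε i * canonCT (fun u v => φ i u v) x y y x ∧
      ε i * canonCT (fun u v => φ i u v) x y y x ≤ M i * G := by
    intro i
    set a : Fin n → ℝ := fun j => (inner ℝ (b i j) x : ℝ) with ha
    set c : Fin n → ℝ := fun j => (inner ℝ (b i j) y : ℝ) with hc
    have hAf : ∀ (u : V) (j : Fin n),
        (inner ℝ (A i u) (b i j) : ℝ) = lam i j * (inner ℝ (b i j) u : ℝ) := by
      intro u j
      rw [← hA, hφsymm, hA, hb, real_inner_smul_left]
    have hφuv : ∀ u v : V,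
        φ i u v = ∑ j, lam i j * ((inner ℝ (b i j) u : ℝ) * (inner ℝ (b i j) v : ℝ)) := by
      intro u v
      rw [hA, ← OrthonormalBasis.sum_inner_mul_inner (b i) (A i u) v]
      exact Finset.sum_congr rfl fun j _ => by rw [hAf]; ring
    have hinner : ∀ u v : V,
        (inner ℝ u v : ℝ) = ∑ j, (inner ℝ (b i j) u : ℝ) * (inner ℝ (b i j) v : ℝ) := by
      intro u v
      rw [← OrthonormalBasis.sum_inner_mul_inner (b i) u v]
      exact Finset.sum_congr rfl fun j _ => by rw [real_inner_comm u (b i j)]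
    have hnum : 2 * (ε i * canonCT (fun u v => φ i u v) x y y x)
        = ∑ j, ∑ l, (ε i * (lam i j * lam i l)) * (a j * c l - a l * c j)^2 := by
      have e1 : canonCT (fun u v => φ i u v) x y y x
          = φ i x x * φ i y y - φ i x y * φ i x y := by
        rw [canonCT, hφsymm i y x]
      have e2 : (2:ℝ) * (ε i * (φ i x x * φ i y y - φ i x y * φ i x y))
          = ε i * (2 * ((∑ j, lam i j * (a j)^2) * (∑ j, lam i j * (c j)^2)
              - (∑ j, lam i j * (a j * c j))^2)) := by
        rw [hφuv x x, hφuv y y, hφuv x y]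
        simp only [pow_two, ← ha, ← hc]
        ring
      rw [e1, e2, lagrange_id]
      rw [Finset.mul_sum]
      exact Finset.sum_congr rfl fun j _ => by
        rw [Finset.mul_sum]
        exact Finset.sum_congr rfl fun l _ => by ring
    have hden : 2 * G = ∑ j, ∑ l, (a j * c l - a l * c j)^2 := by
      have := lagrange_id (fun _ => (1:ℝ)) a c
      simp only [one_mul] at this
      rw [hGdef, hinner x x, hinner y y, hinner x y]
      simp only [pow_two, ← ha, ← hc] at this ⊢
      rw [← this]
    constructor
    · have hle : ∑ j, ∑ l, (m i) * (a j * c l - a l * c j)^2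
          ≤ ∑ j, ∑ l, (ε i * (lam i j * lam i l)) * (a j * c l - a l * c j)^2 := by
        refine Finset.sum_le_sum fun j _ => Finset.sum_le_sum fun l _ => ?_
        by_cases hjl : j = l
        · subst hjl; simp
        · exact mul_le_mul_of_nonneg_right ((hm i).2 ⟨j, l, hjl, rfl⟩) (sq_nonneg _)
      have heq : ∑ j, ∑ l, (m i) * (a j * c l - a l * c j)^2 = m i * (2 * G) := by
        rw [hden, Finset.mul_sum]
        exact Finset.sum_congr rfl fun j _ => by rw [Finset.mul_sum]
      rw [heq, ← hnum] at hle
      linarith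
    · have hle : ∑ j, ∑ l, (ε i * (lam i j * lam i l)) * (a j * c l - a l * c j)^2
          ≤ ∑ j, ∑ l, (M i) * (a j * c l - a l * c j)^2 := by
        refine Finset.sum_le_sum fun j _ => Finset.sum_le_sum fun l _ => ?_
        by_cases hjl : j = l
        · subst hjl; simp
        · exact mul_le_mul_of_nonneg_right ((hM i).2 ⟨j, l, hjl, rfl⟩) (sq_nonneg _)
      have heq : ∑ j, ∑ l, (M i) * (a j * c l - a l * c j)^2 = M i * (2 * G) := by
        rw [hden, Finset.mul_sum]
        exact Finset.sum_congr rfl fun j _ => by rw [Finset.mul_sum]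
      rw [heq, ← hnum] at hle
      linarith
  constructor
  · rw [sectCurv, le_div_iff₀ hG]
    rw [Finset.sum_mul]
    exact Finset.sum_le_sum fun i _ => (key i).1
  · rw [sectCurv, div_le_iff₀ hG]
    rw [Finset.sum_mul]
    exact Finset.sum_le_sum fun i _ => (key i).2
end

section
/- Let V be a real inner product space of finite dimension n ≥ 2 and let φ be a symmetric bilinear form on V with associated self-adjoint operator A. Suppose every sectional curvature of R_φ is nonnegative, i.e., κ_{R_φ}(x,y) ≥ 0 for all linearly independent x, y ∈ V, and that some pair of linearly independent vectors x₀, y₀ satisfies κ_{R_φ}(x₀,y₀) = 0. Then 0 is an eigenvalue of A: there exists a nonzero vector v ∈ V with A v = 0. -/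
lemma gram_pos {V : Type*} [NormedAddCommGroup V] [InnerProductSpace ℝ V] {x y : V}
    (h : LinearIndependent ℝ ![x, y]) :
    0 < (inner ℝ x x : ℝ) * (inner ℝ y y : ℝ) - (inner ℝ x y : ℝ) ^ 2 := by
  have hx : x ≠ 0 := by
    intro hx0
    exact one_ne_zero (LinearIndependent.pair_iff.mp h 1 0 (by simp [hx0])).1
  have hy : y ≠ 0 := by
    intro hy0
    exact one_ne_zero (LinearIndependent.pair_iff.mp h 0 1 (by simp [hy0])).2
  have h1 : (inner ℝ x y : ℝ) < ‖x‖ * ‖y‖ := by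
    rw [inner_lt_norm_mul_iff_real]
    intro heq
    have := LinearIndependent.pair_iff.mp h ‖y‖ (-‖x‖) (by
      rw [neg_smul, ← heq]; abel)
    exact hy (norm_eq_zero.mp (this.1))
  have h2 : -(inner ℝ x y : ℝ) < ‖x‖ * ‖y‖ := by
    have h3 : (inner ℝ x (-y) : ℝ) < ‖x‖ * ‖-y‖ := by
      rw [inner_lt_norm_mul_iff_real]
      intro heq
      have := LinearIndependent.pair_iff.mp h ‖-y‖ ‖x‖ (by
        rw [heq]; simp)
      exact hy (by simpa using this.1)
    simpa [inner_neg_right] using h3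
  rw [real_inner_self_eq_norm_sq, real_inner_self_eq_norm_sq]
  nlinarith [norm_nonneg x, norm_nonneg y]

/-- If all sectional curvatures of `R_φ` are nonnegative and some sectional curvature
vanishes, then `0` is an eigenvalue of the associated self-adjoint operator. -/
theorem zero_eigenvalue_of_nonneg_sectional_curvature_with_zero
    {V : Type*} [NormedAddCommGroup V] [InnerProductSpace ℝ V] [FiniteDimensional ℝ V]
    {n : ℕ} (hn : 2 ≤ n) (hdim : Module.finrank ℝ V = n)
    (φ : V →ₗ[ℝ] V →ₗ[ℝ] ℝ) (hφsymm : ∀ x y : V, φ x y = φ y x)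
    (A : V →ₗ[ℝ] V) (hA : ∀ x y : V, φ x y = (inner ℝ (A x) y : ℝ))
    (hnonneg : ∀ x y : V, LinearIndependent ℝ ![x, y] →
      0 ≤ sectCurv (canonCT (fun u v => φ u v)) x y)
    (x₀ y₀ : V) (hli : LinearIndependent ℝ ![x₀, y₀])
    (hzero : sectCurv (canonCT (fun u v => φ u v)) x₀ y₀ = 0) :
    ∃ v : V, v ≠ 0 ∧ A v = 0 := by
  -- numerator inequality for linearly independent pairs
  have hnum : ∀ x y : V, LinearIndependent ℝ ![x, y] →
      (φ x y) ^ 2 ≤ φ x x * φ y y := by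
    intro x y h
    have hd := gram_pos h
    have h5 := hnonneg x y h
    rw [sectCurv, le_div_iff₀ hd] at h5
    simp only [canonCT, zero_mul] at h5
    rw [← hφsymm x y] at h5
    nlinarith
  -- constant sign of the quadratic form
  have hsign : (∀ x : V, 0 ≤ φ x x) ∨ (∀ x : V, φ x x ≤ 0) := by
    by_cases hneg : ∃ w : V, φ w w < 0
    · right
      obtain ⟨w, hw⟩ := hneg
      intro x
      by_contra hx
      push_neg at hx
      by_cases hdep : LinearIndependent ℝ ![x, w]
      · nlinarith [hnum x w hdep]
      · rw [LinearIndependent.pair_iff] at hdep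
        push_neg at hdep
        obtain ⟨s, t, hst, hst0⟩ := hdep
        by_cases ht : t = 0
        · subst ht
          have hs : s ≠ 0 := by tauto
          have hx0 : x = 0 := by
            have h6 : s • x = 0 := by simpa using hst
            exact (smul_eq_zero.mp h6).resolve_left hs
          rw [hx0] at hx; simp at hx
        · have htw : t • w = -(s • x) := by
            rw [eq_neg_iff_add_eq_zero, add_comm]; exact hst
          have hw' : w = (-(t⁻¹ * s)) • x := by
            have := congrArg (fun z => t⁻¹ • z) htw
            simp only [smul_smul, inv_mul_cancel₀ ht, one_smul, smul_neg] at this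
            rw [neg_smul]; exact this
          have hval : φ w w = (-(t⁻¹ * s))^2 * φ x x := by
            rw [hw']
            simp only [map_smul, LinearMap.smul_apply, smul_eq_mul]
            ring
          nlinarith [sq_nonneg (-(t⁻¹ * s))]
    · left
      push_neg at hneg
      exact hneg
  -- choose sign ε
  obtain ⟨ε, hε1, hψ⟩ : ∃ ε : ℝ, (ε = 1 ∨ ε = -1) ∧ ∀ x : V, 0 ≤ ε * φ x x := by
    rcases hsign with h | h
    · exact ⟨1, Or.inl rfl, fun x => by simpa using h x⟩
    · exact ⟨-1, Or.inr rfl, fun x => by simpa using h x⟩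
  set ψ : V → V → ℝ := fun x y => ε * φ x y with hψdef
  have hψsymm : ∀ x y : V, ψ x y = ψ y x := fun x y => by simp [hψdef, hφsymm x y]
  -- Cauchy–Schwarz for ψ
  have hCS : ∀ x y : V, (ψ x y) ^ 2 ≤ ψ x x * ψ y y := by
    intro x y
    have key : ∀ t : ℝ, 0 ≤ ψ y y * (t * t) + (2 * ψ x y) * t + ψ x x := by
      intro t
      have h7 := hψ (x + t • y)
      simp only [map_add, map_smul, LinearMap.add_apply, LinearMap.smul_apply,
        smul_eq_mul] at h7
      rw [hφsymm y x] at h7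
      simp only [hψdef]
      ring_nf at h7 ⊢
      linarith
    have h8 := discrim_le_zero key
    rw [discrim] at h8
    nlinarith
  -- the zero sectional curvature gives equality
  have heq : ψ x₀ y₀ ^ 2 = ψ x₀ x₀ * ψ y₀ y₀ := by
    have hd := gram_pos hli
    rw [sectCurv, div_eq_zero_iff] at hzero
    rcases hzero with h | h
    · simp only [canonCT] at h
      simp only [hψdef]
      linear_combination (ε^2 * φ x₀ y₀) * hφsymm x₀ y₀ - ε^2 * h
    · linarith
  -- construct the null vector v
  have hnull : ∃ v : V, v ≠ 0 ∧ ψ v v = 0 := by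
    by_cases ha : ψ x₀ x₀ = 0
    · refine ⟨x₀, ?_, ha⟩
      intro h0
      exact one_ne_zero (LinearIndependent.pair_iff.mp hli 1 0 (by simp [h0])).1
    · have e1 : ∀ (a b : ℝ) (u w : V), ψ (a • u + b • w) (a • u + b • w)
          = a^2 * ψ u u + 2*(a*b) * ψ u w + b^2 * ψ w w := by
        intro a b u w
        simp only [hψdef, map_add, map_smul, LinearMap.add_apply, LinearMap.smul_apply,
          smul_eq_mul]
        linear_combination (ε * a * b) * hφsymm w u
      refine ⟨(-(ψ x₀ y₀)) • x₀ + (ψ x₀ x₀) • y₀, ?_, ?_⟩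
      · intro h0
        exact ha (LinearIndependent.pair_iff.mp hli (-(ψ x₀ y₀)) (ψ x₀ x₀) h0).2
      · rw [e1]
        linear_combination (-(ψ x₀ x₀)) * heq
  obtain ⟨v, hv0, hvv⟩ := hnull
  refine ⟨v, hv0, ?_⟩
  have hψv : ∀ w : V, ψ v w = 0 := by
    intro w
    have h9 := hCS v w
    rw [hvv, zero_mul] at h9
    nlinarith [sq_nonneg (ψ v w)]
  have hφv : ∀ w : V, φ v w = 0 := by
    intro w
    have h10 := hψv w
    simp only [hψdef] at h10
    rcases hε1 with h' | h' <;> rw [h'] at h10 <;> linarith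
  have hfin : (inner ℝ (A v) (A v) : ℝ) = 0 := by rw [← hA]; exact hφv (A v)
  exact inner_self_eq_zero.mp hfin
end
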